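/- Let T be a tree on vertex set X × Y, let y₀ ≠ y₁ in Y, let Y₀, Y₁ be disjoint subsets of Y with y₀ ∈ Y₀ and y₁ ∈ Y₁, and let x₁, x₂ ∈ X. Suppose the T-path from (x₁,y₀) to (x₂,y₀) is contained in X × Y₀ and the T-path from (x₁,y₁) to (x₂,y₁) is contained in X × Y₁. Then the first edge of the T-path from (x₁,y₀) to (x₁,y₁) whose endpoint leaves X × Y₀ also occurs on the T-path from (x₂,y₀) to (x₂,y₁). -/

import Mathlib

open SimpleGraph Walk

private lemma myGetVert_drop {V : Type*} {G : SimpleGraph V} {u v : V}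
    (p : G.Walk u v) (n m : ℕ) :
    (p.drop n).getVert m = p.getVert (n + m) := by
  induction p generalizing n with
  | nil => cases n <;> rfl
  | cons h q ih =>
    cases n with
    | zero => simp [Walk.drop, Walk.getVert_copy]
    | succ n =>
      show (q.drop n).getVert m = _
      rw [ih, show n + 1 + m = (n + m) + 1 from by omega,
        Walk.getVert_cons_succ]

private lemma myGetVert_inj {V : Type*} {G : SimpleGraph V} {a b : V}
    {p : G.Walk a b} (hp : p.IsPath) {m n : ℕ}
    (hm : m ≤ p.length) (hn : n ≤ p.length) (h : p.getVert m = p.getVert n) : m = n := by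
  induction p generalizing m n with
  | nil => simp at hm hn; omega
  | cons hadj q ih =>
    rw [Walk.cons_isPath_iff] at hp
    match m, n with
    | 0, 0 => rfl
    | 0, n + 1 =>
      exact absurd (Walk.mem_support_iff_exists_getVert.mpr
        ⟨n, by simpa using h.symm, by simpa using hn⟩) hp.2
    | m + 1, 0 =>
      exact absurd (Walk.mem_support_iff_exists_getVert.mpr
        ⟨m, by simpa using h, by simpa using hm⟩) hp.2
    | m + 1, n + 1 =>
      simp only [Walk.getVert_cons_succ] at h
      have := ih hp.1 (by simpa using hm) (by simpa using hn) h
      omega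

/-- Edge-sharing lemma in a tree on `X × Y`: if the tree-path from `(x₁,y₀)` to
`(x₂,y₀)` stays in `X × Y₀` and the tree-path from `(x₁,y₁)` to `(x₂,y₁)` stays
in `X × Y₁` (with `Y₀, Y₁` disjoint), then the first edge of the tree-path from
`(x₁,y₀)` to `(x₁,y₁)` leaving `X × Y₀` also occurs on the tree-path from
`(x₂,y₀)` to `(x₂,y₁)`. -/
theorem stmt_5 {X Y : Type*} (T : SimpleGraph (X × Y)) (hT : T.IsTree)
    (y₀ y₁ : Y) (hy : y₀ ≠ y₁) (Y₀ Y₁ : Set Y) (hdisj : Disjoint Y₀ Y₁)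
    (hy₀ : y₀ ∈ Y₀) (hy₁ : y₁ ∈ Y₁) (x₁ x₂ : X)
    (p : T.Walk (x₁, y₀) (x₂, y₀)) (hp : p.IsPath)
    (hpY : ∀ v ∈ p.support, v.2 ∈ Y₀)
    (q : T.Walk (x₁, y₁) (x₂, y₁)) (hq : q.IsPath)
    (hqY : ∀ v ∈ q.support, v.2 ∈ Y₁)
    (r : T.Walk (x₁, y₀) (x₁, y₁)) (hr : r.IsPath)
    (w : T.Walk (x₂, y₀) (x₂, y₁)) (hw : w.IsPath)
    (i : ℕ) (hfirst : ∀ j ≤ i, (r.getVert j).2 ∈ Y₀)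
    (hexit : (r.getVert (i + 1)).2 ∉ Y₀) :
    s(r.getVert i, r.getVert (i + 1)) ∈ w.edges := by
  classical
  set u := r.getVert i with hu
  set v := r.getVert (i + 1) with hv
  have hi : i < r.length := by
    by_contra hle
    push_neg at hle
    have h1 := r.getVert_of_length_le hle
    have h2 := r.getVert_of_length_le (le_trans hle (Nat.le_succ i))
    apply hexit
    rw [hv, show r.getVert (i + 1) = r.getVert i from h2.trans h1.symm]
    exact hfirst i le_rfl
  have hadj : T.Adj u v := r.adj_getVert_succ hi
  have hbridge := isAcyclic_iff_forall_adj_isBridge.mp hT.IsAcyclic hadj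
  have hall := SimpleGraph.isBridge_iff_adj_and_forall_walk_mem_edges.mp hbridge
  have hcast : r.reverse.getVert (r.length - i) = u := by
    rw [Walk.getVert_reverse]
    congr 1
    omega
  let t : T.Walk u (x₁, y₀) := (r.reverse.drop (r.length - i)).copy hcast rfl
  have htY : ∀ x ∈ t.support, x.2 ∈ Y₀ := by
    intro x hx
    obtain ⟨m, hm, -⟩ := Walk.mem_support_iff_exists_getVert.mp hx
    have hx' : x = r.getVert (i - m) := by
      rw [← hm]
      show ((r.reverse.drop (r.length - i)).copy hcast rfl).getVert m = _
      rw [Walk.getVert_copy, myGetVert_drop, Walk.getVert_reverse]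
      congr 1
      omega
    rw [hx']
    exact hfirst _ (Nat.sub_le i m)
  let d : T.Walk v (x₁, y₁) := r.drop (i + 1)
  let W : T.Walk u v := t.append (p.append (w.append (q.reverse.append d.reverse)))
  have hW := hall W
  simp only [W, Walk.edges_append, Walk.edges_reverse, List.mem_append, List.mem_reverse] at hW
  rcases hW with (h | h | h | h | h)
  · exact absurd (htY v (Walk.snd_mem_support_of_mem_edges t h)) hexit
  · exact absurd (hpY v (Walk.snd_mem_support_of_mem_edges p h)) hexit
  · exact h
  · exact absurd (hqY u (Walk.fst_mem_support_of_mem_edges q h))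
      (fun h1 => Set.disjoint_left.mp hdisj (hfirst i le_rfl) h1)
  · obtain ⟨m, hm, -⟩ := Walk.mem_support_iff_exists_getVert.mp
      (Walk.fst_mem_support_of_mem_edges d h)
    have hm' : r.getVert (i + 1 + m) = u := by
      rw [← myGetVert_drop r (i + 1) m]
      exact hm
    by_cases hcase : i + 1 + m ≤ r.length
    · have := myGetVert_inj hr hcase (le_of_lt hi) hm'
      omega
    · have hub : u = (x₁, y₁) := by
        rw [← hm', r.getVert_of_length_le (by omega)]
      have : u.2 ∈ Y₁ := by rw [hub]; exact hy₁
      exact absurd (hfirst i le_rfl) (fun h0 => Set.disjoint_left.mp hdisj h0 this)
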